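/- Let b > 0, κ > 0 and l < 0 < h be real numbers. Suppose u* ∈ U_ad, d ∈ L²(μ), λ ∈ L²(μ) satisfies the sign conditions for u*, and the variational inequality ∫ (d + κ·λ + b·u*)·(u − u*) dμ ≥ 0 holds for every u ∈ U_ad. Then for μ-a.e. x: u*(x) = 0 if and only if |d(x)| ≤ κ. (Abstract form of the full-sparsity characterization (3.28) of Theorem 3.4, where d plays the role of −𝕙·p*.) -/

import Mathlib

open MeasureTheory

private lemma meml2_mul {X : Type*} [MeasurableSpace X] {μ : Measure X}
    {f g : X → ℝ} (hf : MemLp f 2 μ) (hg : MemLp g 2 μ) :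
    Integrable (fun x => f x * g x) μ := by
  rw [← memLp_one_iff_integrable]
  have := MemLp.smul (p := 2) (q := 2) (r := 1) hg hf (hpqr := ⟨by simp only [inv_one, ENNReal.inv_two_add_inv_two]⟩)
  simpa [smul_eq_mul, Pi.mul_def] using this

/-- Key pointwise lemma. -/
private lemma pointwise_of_vi {X : Type*} [MeasurableSpace X] (μ : Measure X)
    [IsFiniteMeasure μ] (b κ l h : ℝ)
    (ustar d lam : Lp ℝ 2 μ)
    (hustar : ∀ᵐ x ∂μ, ustar x ∈ Set.Icc l h)
    (hvi : ∀ u : Lp ℝ 2 μ, (∀ᵐ x ∂μ, u x ∈ Set.Icc l h) →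
      0 ≤ ∫ x, (d x + κ * lam x + b * ustar x) * (u x - ustar x) ∂μ)
    (c : ℝ) (hc : c ∈ Set.Icc l h) :
    ∀ᵐ x ∂μ, 0 ≤ (d x + κ * lam x + b * ustar x) * (c - ustar x) := by
  classical
  set g : X → ℝ := fun x => d x + κ * lam x + b * ustar x with hg
  have hgmem : MemLp g 2 μ := by
    exact ((Lp.memLp d).add (((Lp.memLp lam).const_mul κ))).add ((Lp.memLp ustar).const_mul b)
  have hcsub : MemLp (fun x => c - ustar x) 2 μ :=
    (memLp_const c).sub (Lp.memLp ustar)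
  have hint : Integrable (fun x => g x * (c - ustar x)) μ := meml2_mul hgmem hcsub
  apply ae_nonneg_of_forall_setIntegral_nonneg hint
  intro s hs _
  -- test function: c on s, ustar off s
  have hmem : MemLp (s.piecewise (fun _ => c) (fun x => ustar x)) 2 μ := by
    have h1 : MemLp (s.indicator (fun _ => c)) 2 μ :=
      (memLp_const c).indicator hs
    have h2 : MemLp (sᶜ.indicator (fun x => ustar x)) 2 μ :=
      (Lp.memLp ustar).indicator hs.compl
    have heq : s.piecewise (fun _ => c) (fun x => ustar x)
        = s.indicator (fun _ => c) + sᶜ.indicator (fun x => ustar x) := by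
      funext x
      by_cases hx : x ∈ s <;>
        simp [Set.piecewise, Set.indicator, hx]
    rw [heq]; exact h1.add h2
  set u : Lp ℝ 2 μ := hmem.toLp _ with hu
  have hucoe : u =ᵐ[μ] s.piecewise (fun _ => c) (fun x => ustar x) := hmem.coeFn_toLp
  have huad : ∀ᵐ x ∂μ, u x ∈ Set.Icc l h := by
    filter_upwards [hucoe, hustar] with x hx hux
    rw [hx]
    by_cases hxs : x ∈ s
    · simpa [Set.piecewise, hxs] using hc
    · simpa [Set.piecewise, hxs] using hux
  have h0 := hvi u huad
  have heq : (fun x => g x * (u x - ustar x))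
      =ᵐ[μ] s.indicator (fun x => g x * (c - ustar x)) := by
    filter_upwards [hucoe] with x hx
    rw [hx]
    by_cases hxs : x ∈ s <;> simp [Set.piecewise, Set.indicator, hxs]
  rw [integral_congr_ae heq, integral_indicator hs] at h0
  exact h0

theorem fullSparsity_characterization
    {X : Type*} [MeasurableSpace X] (μ : Measure X) [IsFiniteMeasure μ]
    (b κ l h : ℝ) (hb : 0 < b) (hκ : 0 < κ) (hl : l < 0) (hh : 0 < h)
    (ustar d lam : Lp ℝ 2 μ)
    (hustar : ∀ᵐ x ∂μ, ustar x ∈ Set.Icc l h)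
    (hsign : ∀ᵐ x ∂μ, (0 < ustar x → lam x = 1) ∧ (ustar x < 0 → lam x = -1) ∧
      (ustar x = 0 → lam x ∈ Set.Icc (-1 : ℝ) 1))
    (hvi : ∀ u : Lp ℝ 2 μ, (∀ᵐ x ∂μ, u x ∈ Set.Icc l h) →
      0 ≤ ∫ x, (d x + κ * lam x + b * ustar x) * (u x - ustar x) ∂μ) :
    ∀ᵐ x ∂μ, (ustar x = 0 ↔ |d x| ≤ κ) := by
  have hL := pointwise_of_vi μ b κ l h ustar d lam hustar hvi l ⟨le_refl l, hl.le.trans hh.le⟩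
  have hH := pointwise_of_vi μ b κ l h ustar d lam hustar hvi h ⟨hl.le.trans hh.le, le_refl h⟩
  filter_upwards [hL, hH, hsign, hustar] with x hLx hHx hsx hux
  constructor
  · intro h0
    obtain ⟨hlam1, hlam2⟩ := hsx.2.2 h0
    rw [h0] at hLx hHx
    simp only [mul_zero, add_zero, sub_zero] at hLx hHx
    have h1 : d x + κ * lam x ≤ 0 := by
      nlinarith [hLx]
    have h2 : 0 ≤ d x + κ * lam x := by
      nlinarith [hHx]
    have : d x = -(κ * lam x) := by linarith
    rw [abs_le]
    constructor <;> nlinarith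
  · intro hdx
    by_contra hne
    rcases lt_or_gt_of_ne hne with hneg | hpos
    · have hlam := hsx.2.1 hneg
      rw [hlam] at hHx
      have : 0 < h - ustar x := by linarith
      have hg : 0 ≤ d x + κ * (-1) + b * ustar x := by
        by_contra hcon
        push_neg at hcon
        nlinarith
      have : κ ≤ d x := by nlinarith
      have := abs_le.mp hdx
      nlinarith
    · have hlam := hsx.1 hpos
      rw [hlam] at hLx
      have hlt : l - ustar x < 0 := by linarith
      have hg : d x + κ * 1 + b * ustar x ≤ 0 := by
        nlinarith [hLx]
      have := abs_le.mp hdx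
      nlinarith
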